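/- If G is a simple graph with minimum degree δ(G) ≥ 1, then μ_int(G) ≤ 2·⌈Δ(G)/δ(G)⌉, where Δ(G) and δ(G) are the maximum and minimum degrees of G. -/

import Mathlib

open SimpleGraph

/-- The set ("spectrum") of colors appearing on edges incident to vertex `v`
under the edge coloring `c`. -/
def SimpleGraph.colorSpectrum {V : Type*} (G : SimpleGraph V) (c : Sym2 V → ℕ) (v : V) :
    Set ℕ :=
  {n | ∃ w, G.Adj v w ∧ c s(v, w) = n}

/-- A set of natural numbers is an interval of consecutive integers. -/
def IsIntervalSet (S : Set ℕ) : Prop :=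
  ∀ a ∈ S, ∀ b ∈ S, ∀ x, a ≤ x → x ≤ b → x ∈ S

/-- `c` is a `k`-improper interval edge coloring of `G`: at most `k` edges with a common
endpoint share a color, and the colors at each vertex form an interval. -/
def SimpleGraph.IsImproperIntervalColoring {V : Type*} (G : SimpleGraph V)
    (c : Sym2 V → ℕ) (k : ℕ) : Prop :=
  (∀ v n, {w | G.Adj v w ∧ c s(v, w) = n}.ncard ≤ k) ∧
    ∀ v, IsIntervalSet (G.colorSpectrum c v)

/-- The interval coloring impropriety of `G`: the least `k` such that `G` has a
`k`-improper interval edge coloring. -/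
noncomputable def SimpleGraph.muInt {V : Type*} (G : SimpleGraph V) : ℕ :=
  sInf {k | ∃ c : Sym2 V → ℕ, G.IsImproperIntervalColoring c k}


open Finset

namespace IntervalImpro

variable {ι W : Type*} [DecidableEq ι] [DecidableEq W]

variable (ea eb : ι → W)

def tl (o : ι → Bool) (e : ι) : W := if o e then ea e else eb e
def hd (o : ι → Bool) (e : ι) : W := if o e then eb e else ea e

def outC (o : ι → Bool) (A : Finset ι) (v : W) : ℕ :=
  #(A.filter fun e => tl ea eb o e = v)
def inC (o : ι → Bool) (A : Finset ι) (v : W) : ℕ :=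
  #(A.filter fun e => hd ea eb o e = v)
def degA (A : Finset ι) (v : W) : ℕ :=
  #(A.filter fun e => ea e = v ∨ eb e = v)

def Bal (o : ι → Bool) (A : Finset ι) : Prop :=
  ∀ v, outC ea eb o A v ≤ inC ea eb o A v + 1 ∧ inC ea eb o A v ≤ outC ea eb o A v + 1

lemma outC_add_inC (hab : ∀ e, ea e ≠ eb e) (o : ι → Bool) (A : Finset ι) (v : W) :
    outC ea eb o A v + inC ea eb o A v = degA ea eb A v := by
  classical
  unfold outC inC degA
  have hdis : Disjoint (A.filter fun e => tl ea eb o e = v)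
      (A.filter fun e => hd ea eb o e = v) := by
    rw [Finset.disjoint_left]
    intro e he1 he2
    simp only [Finset.mem_filter] at he1 he2
    have h1 := he1.2
    have h2 := he2.2
    unfold tl at h1
    unfold hd at h2
    apply hab e
    cases h : o e <;> rw [h] at h1 h2 <;> simp at h1 h2
    · exact h2.trans h1.symm
    · exact h1.trans h2.symm
  rw [← Finset.card_union_of_disjoint hdis, Finset.filter_union_right]
  congr 1
  apply Finset.filter_congr
  intro e _
  unfold tl hd
  cases o e <;> simp <;> tauto

lemma outC_erase (o : ι → Bool) {A : Finset ι} {e₀ : ι} (he₀ : e₀ ∈ A) (v : W) :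
    outC ea eb o A v = outC ea eb o (A.erase e₀) v
      + if tl ea eb o e₀ = v then 1 else 0 := by
  classical
  unfold outC
  rw [Finset.filter_erase]
  by_cases h : tl ea eb o e₀ = v
  · rw [if_pos h, Finset.card_erase_of_mem (by simp [he₀, h])]
    have : 0 < #(A.filter fun e => tl ea eb o e = v) :=
      Finset.card_pos.2 ⟨e₀, by simp [he₀, h]⟩
    omega
  · rw [if_neg h, Finset.erase_eq_of_notMem (by simp [h]), Nat.add_zero]

lemma inC_erase (o : ι → Bool) {A : Finset ι} {e₀ : ι} (he₀ : e₀ ∈ A) (v : W) :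
    inC ea eb o A v = inC ea eb o (A.erase e₀) v
      + if hd ea eb o e₀ = v then 1 else 0 := by
  classical
  unfold inC
  rw [Finset.filter_erase]
  by_cases h : hd ea eb o e₀ = v
  · rw [if_pos h, Finset.card_erase_of_mem (by simp [he₀, h])]
    have : 0 < #(A.filter fun e => hd ea eb o e = v) :=
      Finset.card_pos.2 ⟨e₀, by simp [he₀, h]⟩
    omega
  · rw [if_neg h, Finset.erase_eq_of_notMem (by simp [h]), Nat.add_zero]

lemma degA_erase {A : Finset ι} {e₀ : ι} (he₀ : e₀ ∈ A) (v : W) :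
    degA ea eb A v = degA ea eb (A.erase e₀) v
      + if ea e₀ = v ∨ eb e₀ = v then 1 else 0 := by
  classical
  unfold degA
  rw [Finset.filter_erase]
  by_cases h : ea e₀ = v ∨ eb e₀ = v
  · rw [if_pos h, Finset.card_erase_of_mem (by simp [he₀, h])]
    have : 0 < #(A.filter fun e => ea e = v ∨ eb e = v) :=
      Finset.card_pos.2 ⟨e₀, by simp [he₀, h]⟩
    omega
  · rw [if_neg h, Finset.erase_eq_of_notMem (by simp [h]), Nat.add_zero]

lemma outC_update_notmem (o : ι → Bool) {A : Finset ι} {e₀ : ι} (he₀ : e₀ ∉ A) (d : Bool)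
    (v : W) : outC ea eb (Function.update o e₀ d) A v = outC ea eb o A v := by
  classical
  unfold outC
  congr 1
  apply Finset.filter_congr
  intro e he
  have hne : e ≠ e₀ := fun h => he₀ (h ▸ he)
  unfold tl
  rw [Function.update_of_ne hne]

lemma inC_update_notmem (o : ι → Bool) {A : Finset ι} {e₀ : ι} (he₀ : e₀ ∉ A) (d : Bool)
    (v : W) : inC ea eb (Function.update o e₀ d) A v = inC ea eb o A v := by
  classical
  unfold inC
  congr 1
  apply Finset.filter_congr
  intro e he
  have hne : e ≠ e₀ := fun h => he₀ (h ▸ he)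
  unfold hd
  rw [Function.update_of_ne hne]

lemma outC_step (o' : ι → Bool) {A : Finset ι} {e₀ : ι} (he₀ : e₀ ∈ A) (d : Bool) (v : W) :
    outC ea eb (Function.update o' e₀ d) A v
      = outC ea eb o' (A.erase e₀) v + if (if d then ea e₀ else eb e₀) = v then 1 else 0 := by
  rw [outC_erase ea eb _ he₀, outC_update_notmem ea eb o' (Finset.notMem_erase e₀ A) d]
  congr 2
  unfold tl
  rw [Function.update_self]

lemma inC_step (o' : ι → Bool) {A : Finset ι} {e₀ : ι} (he₀ : e₀ ∈ A) (d : Bool) (v : W) :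
    inC ea eb (Function.update o' e₀ d) A v
      = inC ea eb o' (A.erase e₀) v + if (if d then eb e₀ else ea e₀) = v then 1 else 0 := by
  rw [inC_erase ea eb _ he₀, inC_update_notmem ea eb o' (Finset.notMem_erase e₀ A) d]
  congr 2
  unfold hd
  rw [Function.update_self]

lemma bal_even_eq (hab : ∀ e, ea e ≠ eb e) {o : ι → Bool} {A : Finset ι}
    (hbal : Bal ea eb o A) {v : W} (hv : Even (degA ea eb A v)) :
    outC ea eb o A v = inC ea eb o A v := by
  have h1 := (hbal v).1
  have h2 := (hbal v).2
  have h3 := outC_add_inC ea eb hab o A v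
  obtain ⟨m, hm⟩ := hv
  omega

lemma Bal_update (hab : ∀ e, ea e ≠ eb e) {A : Finset ι} {e₀ : ι} (he₀ : e₀ ∈ A)
    (o' : ι → Bool) (d : Bool)
    (Hp : outC ea eb o' (A.erase e₀) (if d then ea e₀ else eb e₀)
        ≤ inC ea eb o' (A.erase e₀) (if d then ea e₀ else eb e₀))
    (Hq : inC ea eb o' (A.erase e₀) (if d then eb e₀ else ea e₀)
        ≤ outC ea eb o' (A.erase e₀) (if d then eb e₀ else ea e₀))
    (hbal' : Bal ea eb o' (A.erase e₀)) :
    Bal ea eb (Function.update o' e₀ d) A := by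
  intro v
  rw [outC_step ea eb o' he₀ d v, inC_step ea eb o' he₀ d v]
  have htp : (if d then ea e₀ else eb e₀) ≠ (if d then eb e₀ else ea e₀) := by
    cases d <;> simp [hab e₀, Ne.symm (hab e₀)]
  obtain ⟨hb1, hb2⟩ := hbal' v
  by_cases h1 : (if d then ea e₀ else eb e₀) = v
  · rw [h1] at Hp
    have hne : ¬ ((if d then eb e₀ else ea e₀) = v) := by
      intro h
      exact (Ne.symm htp) (h.trans h1.symm)
    rw [if_pos h1, if_neg hne]
    omega
  · rw [if_neg h1]
    by_cases h2 : (if d then eb e₀ else ea e₀) = v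
    · rw [h2] at Hq
      rw [if_pos h2]
      omega
    · rw [if_neg h2]
      omega

theorem exists_bal [Fintype W] (hab : ∀ e, ea e ≠ eb e) (A : Finset ι) :
    ∃ o, Bal ea eb o A := by
  classical
  induction A using Finset.strongInduction with
  | _ A IH =>
  rcases Finset.eq_empty_or_nonempty A with rfl | hA
  · exact ⟨fun _ => true, fun v => by simp [Bal, outC, inC]⟩
  by_cases h1 : ∃ e₀ ∈ A, Odd (degA ea eb A (ea e₀)) ∧ Odd (degA ea eb A (eb e₀))
  · -- an edge with both endpoints of odd degree
    obtain ⟨e₀, he₀, hop, hoq⟩ := h1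
    obtain ⟨o', ho'⟩ := IH (A.erase e₀) (Finset.erase_ssubset he₀)
    have hdp : degA ea eb A (ea e₀) = degA ea eb (A.erase e₀) (ea e₀) + 1 := by
      rw [degA_erase ea eb he₀ (ea e₀), if_pos (Or.inl rfl)]
    have hdq : degA ea eb A (eb e₀) = degA ea eb (A.erase e₀) (eb e₀) + 1 := by
      rw [degA_erase ea eb he₀ (eb e₀), if_pos (Or.inr rfl)]
    have hevp : Even (degA ea eb (A.erase e₀) (ea e₀)) := by
      obtain ⟨m, hm⟩ := hop; exact ⟨m, by omega⟩
    have hevq : Even (degA ea eb (A.erase e₀) (eb e₀)) := by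
      obtain ⟨m, hm⟩ := hoq; exact ⟨m, by omega⟩
    have heqp := bal_even_eq ea eb hab ho' hevp
    have heqq := bal_even_eq ea eb hab ho' hevq
    refine ⟨Function.update o' e₀ true, Bal_update ea eb hab he₀ o' true ?_ ?_ ho'⟩
    · simpa using le_of_eq heqp
    · simpa using le_of_eq heqq.symm
  by_cases h2 : ∃ v, Odd (degA ea eb A v)
  · -- a vertex of odd degree exists, but no edge joins two odd vertices
    obtain ⟨v₀, hv₀⟩ := h2
    have hpos : 0 < degA ea eb A v₀ := by obtain ⟨m, hm⟩ := hv₀; omega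
    obtain ⟨e₀, he₀mem⟩ := Finset.card_pos.1 hpos
    have he₀A : e₀ ∈ A := (Finset.mem_filter.1 he₀mem).1
    have hinc : ea e₀ = v₀ ∨ eb e₀ = v₀ := (Finset.mem_filter.1 he₀mem).2
    push_neg at h1
    have hnotboth := h1 e₀ he₀A
    obtain ⟨o', ho'⟩ := IH (A.erase e₀) (Finset.erase_ssubset he₀A)
    have hdp : degA ea eb A (ea e₀) = degA ea eb (A.erase e₀) (ea e₀) + 1 := by
      rw [degA_erase ea eb he₀A (ea e₀), if_pos (Or.inl rfl)]
    have hdq : degA ea eb A (eb e₀) = degA ea eb (A.erase e₀) (eb e₀) + 1 := by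
      rw [degA_erase ea eb he₀A (eb e₀), if_pos (Or.inr rfl)]
    rcases hinc with hv | hv
    · -- tail vertex ea e₀ is the odd one
      have hop : Odd (degA ea eb A (ea e₀)) := hv ▸ hv₀
      have hevq : Even (degA ea eb A (eb e₀)) := Nat.not_odd_iff_even.1 (hnotboth hop)
      have hevp' : Even (degA ea eb (A.erase e₀) (ea e₀)) := by
        obtain ⟨m, hm⟩ := hop; exact ⟨m, by omega⟩
      have hoq' : Odd (degA ea eb (A.erase e₀) (eb e₀)) := by
        obtain ⟨m, hm⟩ := hevq; exact ⟨m - 1, by omega⟩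
      have heqp := bal_even_eq ea eb hab ho' hevp'
      have hqsum := outC_add_inC ea eb hab o' (A.erase e₀) (eb e₀)
      obtain ⟨hq1, hq2⟩ := ho' (eb e₀)
      have hodd : outC ea eb o' (A.erase e₀) (eb e₀) ≠ inC ea eb o' (A.erase e₀) (eb e₀) := by
        intro h
        obtain ⟨m, hm⟩ := hoq'
        omega
      rcases Nat.lt_or_ge (inC ea eb o' (A.erase e₀) (eb e₀))
          (outC ea eb o' (A.erase e₀) (eb e₀)) with hlt | hge
      · -- q over-out: make q the head : d = true
        refine ⟨Function.update o' e₀ true, Bal_update ea eb hab he₀A o' true ?_ ?_ ho'⟩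
        · simpa using le_of_eq heqp
        · simpa using le_of_lt hlt
      · -- q over-in: make q the tail : d = false
        refine ⟨Function.update o' e₀ false, Bal_update ea eb hab he₀A o' false ?_ ?_ ho'⟩
        · simpa using (by omega : outC ea eb o' (A.erase e₀) (eb e₀)
            ≤ inC ea eb o' (A.erase e₀) (eb e₀))
        · simpa using le_of_eq heqp.symm
    · -- head vertex eb e₀ is the odd one
      have hoq : Odd (degA ea eb A (eb e₀)) := hv ▸ hv₀
      have hevp : Even (degA ea eb A (ea e₀)) := by
        by_contra h
        exact hnotboth (Nat.not_even_iff_odd.1 h) hoq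
      have hevq' : Even (degA ea eb (A.erase e₀) (eb e₀)) := by
        obtain ⟨m, hm⟩ := hoq; exact ⟨m, by omega⟩
      have hop' : Odd (degA ea eb (A.erase e₀) (ea e₀)) := by
        obtain ⟨m, hm⟩ := hevp; exact ⟨m - 1, by omega⟩
      have heqq := bal_even_eq ea eb hab ho' hevq'
      have hpsum := outC_add_inC ea eb hab o' (A.erase e₀) (ea e₀)
      obtain ⟨hp1, hp2⟩ := ho' (ea e₀)
      have hodd : outC ea eb o' (A.erase e₀) (ea e₀) ≠ inC ea eb o' (A.erase e₀) (ea e₀) := by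
        intro h
        obtain ⟨m, hm⟩ := hop'
        omega
      rcases Nat.lt_or_ge (outC ea eb o' (A.erase e₀) (ea e₀))
          (inC ea eb o' (A.erase e₀) (ea e₀)) with hlt | hge
      · -- p over-in: make p the tail : d = true
        refine ⟨Function.update o' e₀ true, Bal_update ea eb hab he₀A o' true ?_ ?_ ho'⟩
        · simpa using le_of_lt hlt
        · simpa using le_of_eq heqq.symm
      · -- p over-out: make p the head : d = false
        refine ⟨Function.update o' e₀ false, Bal_update ea eb hab he₀A o' false ?_ ?_ ho'⟩
        · simpa using le_of_eq heqq
        · simpa using (by omega : inC ea eb o' (A.erase e₀) (ea e₀)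
            ≤ outC ea eb o' (A.erase e₀) (ea e₀))
  · -- all degrees even
    push_neg at h1
    push_neg at h2
    obtain ⟨e₀, he₀⟩ := hA
    obtain ⟨o', ho'⟩ := IH (A.erase e₀) (Finset.erase_ssubset he₀)
    have hpq : ea e₀ ≠ eb e₀ := hab e₀
    have hdp : degA ea eb A (ea e₀) = degA ea eb (A.erase e₀) (ea e₀) + 1 := by
      rw [degA_erase ea eb he₀ (ea e₀), if_pos (Or.inl rfl)]
    have hdq : degA ea eb A (eb e₀) = degA ea eb (A.erase e₀) (eb e₀) + 1 := by
      rw [degA_erase ea eb he₀ (eb e₀), if_pos (Or.inr rfl)]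
    have hevp : Even (degA ea eb A (ea e₀)) := Nat.not_odd_iff_even.1 (h2 (ea e₀))
    have hevq : Even (degA ea eb A (eb e₀)) := Nat.not_odd_iff_even.1 (h2 (eb e₀))
    have hop' : Odd (degA ea eb (A.erase e₀) (ea e₀)) := by
      obtain ⟨m, hm⟩ := hevp; exact ⟨m - 1, by omega⟩
    have hoq' : Odd (degA ea eb (A.erase e₀) (eb e₀)) := by
      obtain ⟨m, hm⟩ := hevq; exact ⟨m - 1, by omega⟩
    -- global sum argument
    have houtsum : ∑ v ∈ univ, outC ea eb o' (A.erase e₀) v = #(A.erase e₀) :=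
      (Finset.card_eq_sum_card_fiberwise (fun e _ => Finset.mem_univ (tl ea eb o' e))).symm
    have hinsum : ∑ v ∈ univ, inC ea eb o' (A.erase e₀) v = #(A.erase e₀) :=
      (Finset.card_eq_sum_card_fiberwise (fun e _ => Finset.mem_univ (hd ea eb o' e))).symm
    have hrest : ∀ v ∈ univ \ {ea e₀, eb e₀},
        outC ea eb o' (A.erase e₀) v = inC ea eb o' (A.erase e₀) v := by
      intro v hv
      simp only [Finset.mem_sdiff, Finset.mem_univ, Finset.mem_insert, Finset.mem_singleton,
        true_and] at hv
      push_neg at hv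
      have hde : degA ea eb (A.erase e₀) v = degA ea eb A v := by
        rw [degA_erase ea eb he₀ v, if_neg (by tauto)]
        omega
      exact bal_even_eq ea eb hab ho' (hde ▸ Nat.not_odd_iff_even.1 (h2 v))
    have hsub : ({ea e₀, eb e₀} : Finset W) ⊆ univ := Finset.subset_univ _
    have hsplit1 : (∑ v ∈ univ \ {ea e₀, eb e₀}, outC ea eb o' (A.erase e₀) v)
        + ∑ v ∈ ({ea e₀, eb e₀} : Finset W), outC ea eb o' (A.erase e₀) v
        = ∑ v ∈ univ, outC ea eb o' (A.erase e₀) v := Finset.sum_sdiff hsub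
    have hsplit2 : (∑ v ∈ univ \ {ea e₀, eb e₀}, inC ea eb o' (A.erase e₀) v)
        + ∑ v ∈ ({ea e₀, eb e₀} : Finset W), inC ea eb o' (A.erase e₀) v
        = ∑ v ∈ univ, inC ea eb o' (A.erase e₀) v := Finset.sum_sdiff hsub
    have hrs : ∑ v ∈ univ \ {ea e₀, eb e₀}, outC ea eb o' (A.erase e₀) v
        = ∑ v ∈ univ \ {ea e₀, eb e₀}, inC ea eb o' (A.erase e₀) v :=
      Finset.sum_congr rfl hrest
    have hpair1 : ∑ v ∈ ({ea e₀, eb e₀} : Finset W), outC ea eb o' (A.erase e₀) v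
        = outC ea eb o' (A.erase e₀) (ea e₀) + outC ea eb o' (A.erase e₀) (eb e₀) :=
      Finset.sum_pair hpq
    have hpair2 : ∑ v ∈ ({ea e₀, eb e₀} : Finset W), inC ea eb o' (A.erase e₀) v
        = inC ea eb o' (A.erase e₀) (ea e₀) + inC ea eb o' (A.erase e₀) (eb e₀) :=
      Finset.sum_pair hpq
    have hballance : outC ea eb o' (A.erase e₀) (ea e₀) + outC ea eb o' (A.erase e₀) (eb e₀)
        = inC ea eb o' (A.erase e₀) (ea e₀) + inC ea eb o' (A.erase e₀) (eb e₀) := by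
      omega
    have hpsum := outC_add_inC ea eb hab o' (A.erase e₀) (ea e₀)
    have hqsum := outC_add_inC ea eb hab o' (A.erase e₀) (eb e₀)
    obtain ⟨hp1, hp2⟩ := ho' (ea e₀)
    obtain ⟨hq1, hq2⟩ := ho' (eb e₀)
    obtain ⟨mp, hmp⟩ := hop'
    obtain ⟨mq, hmq⟩ := hoq'
    have hcase : (outC ea eb o' (A.erase e₀) (ea e₀) = inC ea eb o' (A.erase e₀) (ea e₀) + 1
          ∧ inC ea eb o' (A.erase e₀) (eb e₀) = outC ea eb o' (A.erase e₀) (eb e₀) + 1)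
        ∨ (inC ea eb o' (A.erase e₀) (ea e₀) = outC ea eb o' (A.erase e₀) (ea e₀) + 1
          ∧ outC ea eb o' (A.erase e₀) (eb e₀) = inC ea eb o' (A.erase e₀) (eb e₀) + 1) := by
      omega
    rcases hcase with ⟨hc1, hc2⟩ | ⟨hc1, hc2⟩
    · -- p over-out: make p the head : d = false (tail = eb e₀)
      refine ⟨Function.update o' e₀ false, Bal_update ea eb hab he₀ o' false ?_ ?_ ho'⟩
      · simpa using (by omega : outC ea eb o' (A.erase e₀) (eb e₀)
          ≤ inC ea eb o' (A.erase e₀) (eb e₀))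
      · simpa using (by omega : inC ea eb o' (A.erase e₀) (ea e₀)
          ≤ outC ea eb o' (A.erase e₀) (ea e₀))
    · -- p over-in: make p the tail : d = true
      refine ⟨Function.update o' e₀ true, Bal_update ea eb hab he₀ o' true ?_ ?_ ho'⟩
      · simpa using (by omega : outC ea eb o' (A.erase e₀) (ea e₀)
          ≤ inC ea eb o' (A.erase e₀) (ea e₀))
      · simpa using (by omega : inC ea eb o' (A.erase e₀) (eb e₀)
          ≤ outC ea eb o' (A.erase e₀) (eb e₀))


section Arith

lemma sq_bal_le {x y x' y' : ℕ} (hsum : x' + y' = x + y) (hb1 : x' ≤ y' + 1)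
    (hb2 : y' ≤ x' + 1) : x' ^ 2 + y' ^ 2 ≤ x ^ 2 + y ^ 2 := by
  have hz : (x' : ℤ) + y' = x + y := by exact_mod_cast hsum
  have hd1 : (-1 : ℤ) ≤ (x' : ℤ) - y' := by
    have : (y' : ℤ) ≤ x' + 1 := by exact_mod_cast hb2
    linarith
  have hd2 : ((x' : ℤ) - y') ≤ 1 := by
    have : (x' : ℤ) ≤ y' + 1 := by exact_mod_cast hb1
    linarith
  have key : ((x' : ℤ) - y') ^ 2 ≤ ((x : ℤ) - y) ^ 2 := by
    rcases eq_or_ne x y with h | h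
    · have hxy : (x : ℤ) = y := by exact_mod_cast h
      have hzero : (x' : ℤ) - y' = 0 := by omega
      rw [hzero, hxy]
      positivity
    · have hne : (x : ℤ) ≠ y := by exact_mod_cast h
      have h2 : 1 ≤ ((x : ℤ) - y) ^ 2 := by
        rcases hne.lt_or_gt with hl | hl
        · nlinarith
        · nlinarith
      nlinarith
  have goalz : (x' : ℤ) ^ 2 + y' ^ 2 ≤ (x : ℤ) ^ 2 + y ^ 2 := by nlinarith [key, hz]
  exact_mod_cast goalz

lemma sq_bal_lt {x y x' y' : ℕ} (hsum : x' + y' = x + y) (hb1 : x' ≤ y' + 1)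
    (hb2 : y' ≤ x' + 1) (hst : y + 2 ≤ x ∨ x + 2 ≤ y) :
    x' ^ 2 + y' ^ 2 < x ^ 2 + y ^ 2 := by
  have hz : (x' : ℤ) + y' = x + y := by exact_mod_cast hsum
  have hd1 : (-1 : ℤ) ≤ (x' : ℤ) - y' := by
    have : (y' : ℤ) ≤ x' + 1 := by exact_mod_cast hb2
    linarith
  have hd2 : ((x' : ℤ) - y') ≤ 1 := by
    have : (x' : ℤ) ≤ y' + 1 := by exact_mod_cast hb1
    linarith
  have key : ((x' : ℤ) - y') ^ 2 ≤ 1 := by nlinarith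
  have h4 : 4 ≤ ((x : ℤ) - y) ^ 2 := by
    rcases hst with h | h
    · have : (y : ℤ) + 2 ≤ x := by exact_mod_cast h
      nlinarith
    · have : (x : ℤ) + 2 ≤ y := by exact_mod_cast h
      nlinarith
  have goalz : (x' : ℤ) ^ 2 + y' ^ 2 < (x : ℤ) ^ 2 + y ^ 2 := by nlinarith [key, h4, hz]
  exact_mod_cast goalz

end Arith

variable {ι W : Type*} [DecidableEq ι] [DecidableEq W] [Fintype ι] [Fintype W]

variable (ea eb : ι → W)

variable {k : ℕ}

def incCnt (c : ι → Fin k) (u : W) (i : Fin k) : ℕ :=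
  #(univ.filter fun e => (ea e = u ∨ eb e = u) ∧ c e = i)

private lemma card_or_split {p q : ι → Prop} [DecidablePred p] [DecidablePred q]
    (hdis : ∀ e, ¬(p e ∧ q e)) :
    #(univ.filter fun e => p e ∨ q e) = #(univ.filter p) + #(univ.filter q) := by
  have hdisj : Disjoint (univ.filter p) (univ.filter q) := by
    rw [Finset.disjoint_left]
    intro e he1 he2
    simp only [Finset.mem_filter, Finset.mem_univ, true_and] at he1 he2
    exact hdis e ⟨he1, he2⟩
  rw [Finset.filter_or, Finset.card_union_of_disjoint hdisj]

private lemma card_filter_iff {p q : ι → Prop} [DecidablePred p] [DecidablePred q]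
    (h : ∀ e, p e ↔ q e) : #(univ.filter p) = #(univ.filter q) := by
  congr 1
  exact Finset.filter_congr fun e _ => by simp only [h]

/-- the four refined counts used in the rebalancing argument -/
private def n4 (c : ι → Fin k) (i j : Fin k) (o : ι → Bool) (u : W) (s : Bool)
    (f : ι → W) : ℕ :=
  #(univ.filter fun e => ((c e = i ∨ c e = j) ∧ o e = s) ∧ f e = u)

theorem exists_equitable (hs : ∀ e₁ e₂, ea e₁ ≠ eb e₂) (hk : 0 < k) :
    ∃ c : ι → Fin k, ∀ u i j, incCnt ea eb c u i ≤ incCnt ea eb c u j + 1 := by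
  classical
  have hab : ∀ e, ea e ≠ eb e := fun e => hs e e
  haveI : Nonempty (Fin k) := ⟨⟨0, hk⟩⟩
  obtain ⟨c₀, -, hmin⟩ := Finset.exists_min_image (Finset.univ : Finset (ι → Fin k))
    (fun c => ∑ u ∈ univ, ∑ l ∈ univ, (incCnt ea eb c u l) ^ 2) Finset.univ_nonempty
  refine ⟨c₀, ?_⟩
  by_contra hcon
  push_neg at hcon
  obtain ⟨u₀, i, j, hwit⟩ := hcon
  have hij : i ≠ j := by
    intro h
    rw [h] at hwit
    omega
  set P : Finset ι := univ.filter (fun e => c₀ e = i ∨ c₀ e = j) with hP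
  obtain ⟨o, ho⟩ := exists_bal ea eb hab P
  set c' : ι → Fin k := fun e => if c₀ e = i ∨ c₀ e = j then (if o e then i else j) else c₀ e
    with hc'
  -- characterization of the new colors
  have hc'i : ∀ e, c' e = i ↔ ((c₀ e = i ∨ c₀ e = j) ∧ o e = true) := by
    intro e
    by_cases hQ : c₀ e = i ∨ c₀ e = j
    · simp only [hc', if_pos hQ]
      cases hoe : o e <;> simp [hoe, hQ, hij, Ne.symm hij]
    · simp only [hc', if_neg hQ]
      constructor
      · intro h; exact absurd (Or.inl h) hQ
      · intro h; exact absurd h.1 hQ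
  have hc'j : ∀ e, c' e = j ↔ ((c₀ e = i ∨ c₀ e = j) ∧ o e = false) := by
    intro e
    by_cases hQ : c₀ e = i ∨ c₀ e = j
    · simp only [hc', if_pos hQ]
      cases hoe : o e <;> simp [hoe, hQ, hij, Ne.symm hij]
    · simp only [hc', if_neg hQ]
      constructor
      · intro h; exact absurd (Or.inr h) hQ
      · intro h; exact absurd h.1 hQ
  have hc'other : ∀ e (l : Fin k), l ≠ i → l ≠ j → (c' e = l ↔ c₀ e = l) := by
    intro e l hli hlj
    by_cases hQ : c₀ e = i ∨ c₀ e = j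
    · simp only [hc', if_pos hQ]
      constructor
      · intro h
        cases hoe : o e <;> rw [hoe] at h <;> simp at h
        · exact absurd h.symm hlj
        · exact absurd h.symm hli
      · intro h
        rcases hQ with hh | hh
        · exact absurd (h.symm.trans hh) hli
        · exact absurd (h.symm.trans hh) hlj
    · simp [hc', if_neg hQ]
  -- count identities
  have Hi : ∀ u, incCnt ea eb c' u i = n4 c₀ i j o u true ea + n4 c₀ i j o u true eb := by
    intro u
    unfold incCnt n4
    rw [card_filter_iff (q := fun e =>
      (((c₀ e = i ∨ c₀ e = j) ∧ o e = true) ∧ ea e = u)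
        ∨ (((c₀ e = i ∨ c₀ e = j) ∧ o e = true) ∧ eb e = u))
      (fun e => by rw [hc'i e]; tauto)]
    exact card_or_split (fun e h => hab e (h.1.2.trans h.2.2.symm))
  have Hj : ∀ u, incCnt ea eb c' u j = n4 c₀ i j o u false ea + n4 c₀ i j o u false eb := by
    intro u
    unfold incCnt n4
    rw [card_filter_iff (q := fun e =>
      (((c₀ e = i ∨ c₀ e = j) ∧ o e = false) ∧ ea e = u)
        ∨ (((c₀ e = i ∨ c₀ e = j) ∧ o e = false) ∧ eb e = u))
      (fun e => by rw [hc'j e]; tauto)]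
    exact card_or_split (fun e h => hab e (h.1.2.trans h.2.2.symm))
  have Hout : ∀ u, outC ea eb o P u = n4 c₀ i j o u true ea + n4 c₀ i j o u false eb := by
    intro u
    unfold outC n4
    rw [hP, Finset.filter_filter]
    rw [card_filter_iff (q := fun e =>
      (((c₀ e = i ∨ c₀ e = j) ∧ o e = true) ∧ ea e = u)
        ∨ (((c₀ e = i ∨ c₀ e = j) ∧ o e = false) ∧ eb e = u))
      (fun e => by unfold tl; cases hoe : o e <;> simp [hoe] <;> tauto)]
    apply card_or_split
    intro e h
    rw [h.1.1.2] at h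
    simp at h
  have Hin : ∀ u, inC ea eb o P u = n4 c₀ i j o u true eb + n4 c₀ i j o u false ea := by
    intro u
    unfold inC n4
    rw [hP, Finset.filter_filter]
    rw [card_filter_iff (q := fun e =>
      (((c₀ e = i ∨ c₀ e = j) ∧ o e = true) ∧ eb e = u)
        ∨ (((c₀ e = i ∨ c₀ e = j) ∧ o e = false) ∧ ea e = u))
      (fun e => by unfold hd; cases hoe : o e <;> simp [hoe] <;> tauto)]
    apply card_or_split
    intro e h
    rw [h.1.1.2] at h
    simp at h
  -- sidedness : at every u one of the two "sides" vanishes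
  have hside : ∀ u : W, (∀ e, ea e ≠ u) ∨ (∀ e, eb e ≠ u) := by
    intro u
    by_contra h
    push_neg at h
    obtain ⟨⟨e₁, he₁⟩, ⟨e₂, he₂⟩⟩ := h
    exact hs e₁ e₂ (he₁.trans he₂.symm)
  have hzeroa : ∀ u s, (∀ e, ea e ≠ u) → n4 c₀ i j o u s ea = 0 := by
    intro u s h
    unfold n4
    rw [Finset.card_eq_zero, Finset.filter_eq_empty_iff]
    intro e _ hcon
    exact h e hcon.2
  have hzerob : ∀ u s, (∀ e, eb e ≠ u) → n4 c₀ i j o u s eb = 0 := by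
    intro u s h
    unfold n4
    rw [Finset.card_eq_zero, Finset.filter_eq_empty_iff]
    intro e _ hcon
    exact h e hcon.2
  -- balance of the new pair counts at every vertex
  have hbalpair : ∀ u, incCnt ea eb c' u i ≤ incCnt ea eb c' u j + 1
      ∧ incCnt ea eb c' u j ≤ incCnt ea eb c' u i + 1 := by
    intro u
    have h1 := (ho u).1
    have h2 := (ho u).2
    rw [Hout u, Hin u] at h1 h2
    rw [Hi u, Hj u]
    rcases hside u with h | h
    · have z1 := hzeroa u true h
      have z2 := hzeroa u false h
      omega
    · have z1 := hzerob u true h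
      have z2 := hzerob u false h
      omega
  -- pair-sum preservation at every vertex
  have hsumpres : ∀ u, incCnt ea eb c' u i + incCnt ea eb c' u j
      = incCnt ea eb c₀ u i + incCnt ea eb c₀ u j := by
    intro u
    unfold incCnt
    rw [← card_or_split (p := fun e => (ea e = u ∨ eb e = u) ∧ c' e = i)
        (q := fun e => (ea e = u ∨ eb e = u) ∧ c' e = j)
        (fun e ⟨ha, hb⟩ => hij (ha.2.symm.trans hb.2)),
      ← card_or_split (p := fun e => (ea e = u ∨ eb e = u) ∧ c₀ e = i)
        (q := fun e => (ea e = u ∨ eb e = u) ∧ c₀ e = j)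
        (fun e ⟨ha, hb⟩ => hij (ha.2.symm.trans hb.2))]
    apply card_filter_iff
    intro e
    constructor
    · rintro (⟨hu, hc⟩ | ⟨hu, hc⟩)
      · exact ((hc'i e).1 hc).1.elim (fun h => Or.inl ⟨hu, h⟩) (fun h => Or.inr ⟨hu, h⟩)
      · exact ((hc'j e).1 hc).1.elim (fun h => Or.inl ⟨hu, h⟩) (fun h => Or.inr ⟨hu, h⟩)
    · rintro (⟨hu, hc⟩ | ⟨hu, hc⟩) <;>
      · have hQ : c₀ e = i ∨ c₀ e = j := by tauto
        cases hoe : o e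
        · exact Or.inr ⟨hu, (hc'j e).2 ⟨hQ, hoe⟩⟩
        · exact Or.inl ⟨hu, (hc'i e).2 ⟨hQ, hoe⟩⟩
  -- other colors are untouched
  have hother : ∀ u (l : Fin k), l ≠ i → l ≠ j →
      incCnt ea eb c' u l = incCnt ea eb c₀ u l := by
    intro u l hli hlj
    unfold incCnt
    apply card_filter_iff
    intro e
    rw [hc'other e l hli hlj]
  -- potential strictly decreases : contradiction
  have hpoint : ∀ u, ∑ l ∈ univ, (incCnt ea eb c' u l) ^ 2
      ≤ ∑ l ∈ univ, (incCnt ea eb c₀ u l) ^ 2 := by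
    intro u
    have hsub : ({i, j} : Finset (Fin k)) ⊆ univ := Finset.subset_univ _
    have e1 : (∑ l ∈ univ \ {i, j}, (incCnt ea eb c' u l) ^ 2)
        + ∑ l ∈ ({i, j} : Finset (Fin k)), (incCnt ea eb c' u l) ^ 2
        = ∑ l ∈ univ, (incCnt ea eb c' u l) ^ 2 := Finset.sum_sdiff hsub
    have e2 : (∑ l ∈ univ \ {i, j}, (incCnt ea eb c₀ u l) ^ 2)
        + ∑ l ∈ ({i, j} : Finset (Fin k)), (incCnt ea eb c₀ u l) ^ 2
        = ∑ l ∈ univ, (incCnt ea eb c₀ u l) ^ 2 := Finset.sum_sdiff hsub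
    have e3 : ∑ l ∈ univ \ {i, j}, (incCnt ea eb c' u l) ^ 2
        = ∑ l ∈ univ \ {i, j}, (incCnt ea eb c₀ u l) ^ 2 := by
      apply Finset.sum_congr rfl
      intro l hl
      simp only [Finset.mem_sdiff, Finset.mem_insert, Finset.mem_singleton] at hl
      push_neg at hl
      rw [hother u l hl.2.1 hl.2.2]
    have e4 : ∑ l ∈ ({i, j} : Finset (Fin k)), (incCnt ea eb c' u l) ^ 2
        = (incCnt ea eb c' u i) ^ 2 + (incCnt ea eb c' u j) ^ 2 := Finset.sum_pair hij
    have e5 : ∑ l ∈ ({i, j} : Finset (Fin k)), (incCnt ea eb c₀ u l) ^ 2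
        = (incCnt ea eb c₀ u i) ^ 2 + (incCnt ea eb c₀ u j) ^ 2 := Finset.sum_pair hij
    have e6 := sq_bal_le (hsumpres u) (hbalpair u).1 (hbalpair u).2
    omega
  have hstrict : ∑ l ∈ univ, (incCnt ea eb c' u₀ l) ^ 2
      < ∑ l ∈ univ, (incCnt ea eb c₀ u₀ l) ^ 2 := by
    have hsub : ({i, j} : Finset (Fin k)) ⊆ univ := Finset.subset_univ _
    have e1 : (∑ l ∈ univ \ {i, j}, (incCnt ea eb c' u₀ l) ^ 2)
        + ∑ l ∈ ({i, j} : Finset (Fin k)), (incCnt ea eb c' u₀ l) ^ 2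
        = ∑ l ∈ univ, (incCnt ea eb c' u₀ l) ^ 2 := Finset.sum_sdiff hsub
    have e2 : (∑ l ∈ univ \ {i, j}, (incCnt ea eb c₀ u₀ l) ^ 2)
        + ∑ l ∈ ({i, j} : Finset (Fin k)), (incCnt ea eb c₀ u₀ l) ^ 2
        = ∑ l ∈ univ, (incCnt ea eb c₀ u₀ l) ^ 2 := Finset.sum_sdiff hsub
    have e3 : ∑ l ∈ univ \ {i, j}, (incCnt ea eb c' u₀ l) ^ 2
        = ∑ l ∈ univ \ {i, j}, (incCnt ea eb c₀ u₀ l) ^ 2 := by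
      apply Finset.sum_congr rfl
      intro l hl
      simp only [Finset.mem_sdiff, Finset.mem_insert, Finset.mem_singleton] at hl
      push_neg at hl
      rw [hother u₀ l hl.2.1 hl.2.2]
    have e4 : ∑ l ∈ ({i, j} : Finset (Fin k)), (incCnt ea eb c' u₀ l) ^ 2
        = (incCnt ea eb c' u₀ i) ^ 2 + (incCnt ea eb c' u₀ j) ^ 2 := Finset.sum_pair hij
    have e5 : ∑ l ∈ ({i, j} : Finset (Fin k)), (incCnt ea eb c₀ u₀ l) ^ 2
        = (incCnt ea eb c₀ u₀ i) ^ 2 + (incCnt ea eb c₀ u₀ j) ^ 2 := Finset.sum_pair hij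
    have e6 := sq_bal_lt (hsumpres u₀) (hbalpair u₀).1 (hbalpair u₀).2 (Or.inl hwit)
    omega
  have htot : ∑ u ∈ univ, ∑ l ∈ univ, (incCnt ea eb c' u l) ^ 2
      < ∑ u ∈ univ, ∑ l ∈ univ, (incCnt ea eb c₀ u l) ^ 2 := by
    apply Finset.sum_lt_sum (fun u _ => hpoint u) ⟨u₀, Finset.mem_univ u₀, hstrict⟩
  exact absurd (hmin c' (Finset.mem_univ c')) (by omega)


lemma card_filter_sum {α β : Type*} [Fintype α] [Fintype β] [DecidableEq α] [DecidableEq β]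
    (p : α ⊕ β → Prop) [DecidablePred p] :
    #(univ.filter p) = #(univ.filter fun a => p (Sum.inl a))
      + #(univ.filter fun b => p (Sum.inr b)) := by
  classical
  have hU : (univ.filter p)
      = ((univ.filter fun a => p (Sum.inl a)).map ⟨Sum.inl, Sum.inl_injective⟩)
        ∪ ((univ.filter fun b => p (Sum.inr b)).map ⟨Sum.inr, Sum.inr_injective⟩) := by
    ext e
    rcases e with a | b <;> simp
  have hdisj : Disjoint ((univ.filter fun a => p (Sum.inl a)).map ⟨Sum.inl, Sum.inl_injective⟩)
      ((univ.filter fun b => p (Sum.inr b)).map ⟨Sum.inr, Sum.inr_injective⟩) := by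
    rw [Finset.disjoint_left]
    rintro e he1 he2
    simp only [Finset.mem_map, Function.Embedding.coeFn_mk] at he1 he2
    obtain ⟨a, -, rfl⟩ := he1
    obtain ⟨b, -, hb⟩ := he2
    exact absurd hb (by simp)
  rw [hU, Finset.card_union_of_disjoint hdisj, Finset.card_map, Finset.card_map]

lemma cnt_bounds {k : ℕ} (hk : 0 < k) (f : Fin k → ℕ) (s t : ℕ)
    (hsum : ∑ i ∈ univ, f i = s) (hbal : ∀ i j, f i ≤ f j + 1)
    (hlow : k ≤ s) (hhigh : s ≤ k * t) : ∀ i, 1 ≤ f i ∧ f i ≤ t := by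
  intro i
  have hcard : #(univ.erase i) = k - 1 := by
    rw [Finset.card_erase_of_mem (Finset.mem_univ i), Finset.card_univ, Fintype.card_fin]
  have hsplit : ∑ j ∈ univ.erase i, f j + f i = s := by
    rw [Finset.sum_erase_add _ _ (Finset.mem_univ i), hsum]
  have hup : ∑ j ∈ univ.erase i, f j ≤ (k - 1) * (f i + 1) := by
    calc ∑ j ∈ univ.erase i, f j ≤ ∑ _j ∈ univ.erase i, (f i + 1) :=
          Finset.sum_le_sum (fun j _ => hbal j i)
      _ = (k - 1) * (f i + 1) := by rw [Finset.sum_const, hcard, smul_eq_mul]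
  have hdn : (k - 1) * f i ≤ ∑ j ∈ univ.erase i, f j + (k - 1) := by
    calc (k - 1) * f i = ∑ _j ∈ univ.erase i, f i := by
          rw [Finset.sum_const, hcard, smul_eq_mul]
      _ ≤ ∑ j ∈ univ.erase i, (f j + 1) := Finset.sum_le_sum (fun j _ => hbal i j)
      _ = ∑ j ∈ univ.erase i, f j + (k - 1) := by
          rw [Finset.sum_add_distrib, Finset.sum_const, hcard, smul_eq_mul, mul_one]
  constructor
  · by_contra h
    push_neg at h
    have hfi : f i = 0 := by omega
    rw [hfi] at hup
    omega
  · by_contra h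
    push_neg at h
    have h1 : (k - 1) * (t + 1) ≤ (k - 1) * f i := Nat.mul_le_mul_left _ h
    have h2 : (k - 1) * (t + 1) = (k - 1) * t + (k - 1) := by ring
    have h3 : k * t = (k - 1) * t + t := by
      calc k * t = ((k - 1) + 1) * t := by rw [Nat.sub_add_cancel hk]
        _ = (k - 1) * t + t := by ring
    omega

theorem main_construction {V : Type*} [Fintype V] (G : SimpleGraph V) [DecidableRel G.Adj]
    [Nonempty V] (hδ : 1 ≤ G.minDegree) :
    ∃ c : Sym2 V → ℕ,
      G.IsImproperIntervalColoring c
        (2 * ((G.maxDegree + G.minDegree - 1) / G.minDegree)) := by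
  classical
  obtain ⟨v₀⟩ := ‹Nonempty V›
  have hδd : ∀ v, G.minDegree ≤ G.degree v := G.minDegree_le_degree
  have hΔd : ∀ v, G.degree v ≤ G.maxDegree := G.degree_le_maxDegree
  set δ := G.minDegree with hδdef
  set Δ := G.maxDegree with hΔdef
  set t := (Δ + δ - 1) / δ with ht
  have hδ1 : 1 ≤ δ := hδ
  have hδΔ : δ ≤ Δ := le_trans (hδd v₀) (hΔd v₀)
  have ht1 : 1 ≤ t := by
    rw [ht, Nat.le_div_iff_mul_le (by omega)]
    omega
  have hΔt : Δ ≤ δ * t := by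
    have h1 := Nat.div_add_mod (Δ + δ - 1) δ
    have h2 : (Δ + δ - 1) % δ < δ := Nat.mod_lt _ (by omega)
    rw [← ht] at h1
    omega
  set k := (δ + 1) / 2 with hk
  have hk1 : 1 ≤ k := by omega
  have h2k : 2 * k = δ ∨ 2 * k = δ + 1 := by omega
  -- pads : a perfect matching on the odd-degree vertices
  set O := univ.filter (fun v => Odd (G.degree v)) with hO
  have hOeven : Even #O := G.even_card_odd_degree_vertices
  set m := #O / 2 with hm
  have hOm : #O = 2 * m := by obtain ⟨r, hr⟩ := hOeven; omega
  set eqO : {x // x ∈ O} ≃ Fin (2 * m) := O.equivFin.trans (finCongr hOm) with heqO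
  set pE : Fin (2 * m) → V := fun r => (eqO.symm r).val with hpE
  have hpE_mem : ∀ r, pE r ∈ O := fun r => (eqO.symm r).property
  have hpE_inj : Function.Injective pE := by
    intro r1 r2 h
    exact eqO.symm.injective (Subtype.coe_injective h)
  -- the edges of the padded multigraph
  set ea : (↥G.edgeFinset ⊕ Fin m) → V :=
    Sum.elim (fun e => (Quot.out e.val).1)
      (fun i => pE ⟨2 * i.val, by have := i.isLt; omega⟩) with hea
  set eb : (↥G.edgeFinset ⊕ Fin m) → V :=
    Sum.elim (fun e => (Quot.out e.val).2)
      (fun i => pE ⟨2 * i.val + 1, by have := i.isLt; omega⟩) with heb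
  have hrep : ∀ e : ↥G.edgeFinset, s((Quot.out e.val).1, (Quot.out e.val).2) = e.val :=
    fun e => Quot.out_eq e.val
  have hadj : ∀ e : ↥G.edgeFinset, G.Adj (Quot.out e.val).1 (Quot.out e.val).2 := by
    intro e
    have hmm : e.val ∈ G.edgeSet := SimpleGraph.mem_edgeFinset.1 e.property
    rw [← hrep e] at hmm
    exact hmm
  have hab : ∀ e, ea e ≠ eb e := by
    rintro (e | i) h
    · simp only [hea, heb, Sum.elim_inl] at h
      exact (hadj e).ne h
    · simp only [hea, heb, Sum.elim_inr] at h
      have h2 := congrArg Fin.val (hpE_inj h)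
      simp at h2
  have hmemiff : ∀ (e : ↥G.edgeFinset) (x : V),
      x ∈ e.val ↔ ea (Sum.inl e) = x ∨ eb (Sum.inl e) = x := by
    intro e x
    conv_lhs => rw [← hrep e]
    rw [Sym2.mem_iff]
    simp only [hea, heb, Sum.elim_inl]
    constructor
    · rintro (h | h)
      · exact Or.inl h.symm
      · exact Or.inr h.symm
    · rintro (h | h)
      · exact Or.inl h.symm
      · exact Or.inr h.symm
  -- degrees of the padded multigraph
  have hreal_cnt : ∀ v, #(univ.filter fun e : ↥G.edgeFinset =>
      ea (Sum.inl e) = v ∨ eb (Sum.inl e) = v) = G.degree v := by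
    intro v
    rw [← G.card_incidenceFinset_eq_degree v]
    apply Finset.card_bij (fun e _ => e.val)
    · intro e he
      simp only [Finset.mem_filter, Finset.mem_univ, true_and] at he
      rw [SimpleGraph.mem_incidenceFinset]
      exact ⟨SimpleGraph.mem_edgeFinset.1 e.property, (hmemiff e v).2 he⟩
    · intro e1 h1 e2 h2 h
      exact Subtype.ext h
    · intro sy hs
      rw [SimpleGraph.mem_incidenceFinset] at hs
      refine ⟨⟨sy, SimpleGraph.mem_edgeFinset.2 hs.1⟩, ?_, rfl⟩
      simp only [Finset.mem_filter, Finset.mem_univ, true_and]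
      exact (hmemiff ⟨sy, SimpleGraph.mem_edgeFinset.2 hs.1⟩ v).1 hs.2
  have hpad_cnt : ∀ v, #(univ.filter fun i : Fin m =>
      ea (Sum.inr i) = v ∨ eb (Sum.inr i) = v)
      = if Odd (G.degree v) then 1 else 0 := by
    intro v
    by_cases hv : Odd (G.degree v)
    · rw [if_pos hv]
      have hvO : v ∈ O := by rw [hO]; simp [hv]
      have hiff : ∀ r : Fin (2 * m), pE r = v ↔ r = eqO ⟨v, hvO⟩ := by
        intro r
        constructor
        · intro h
          have h2 : eqO.symm r = ⟨v, hvO⟩ := Subtype.ext h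
          rw [← h2, Equiv.apply_symm_apply]
        · rintro rfl
          rw [hpE]
          simp
      rw [Finset.card_eq_one]
      refine ⟨⟨(eqO ⟨v, hvO⟩).val / 2, by have := (eqO ⟨v, hvO⟩).isLt; omega⟩, ?_⟩
      ext i
      simp only [Finset.mem_filter, Finset.mem_univ, true_and, Finset.mem_singleton,
        hea, heb, Sum.elim_inr, hiff]
      constructor
      · rintro (h | h) <;>
        · have h2 := congrArg Fin.val h
          simp only at h2
          apply Fin.ext
          simp only
          omega
      · intro h
        have h2 := congrArg Fin.val h
        simp only at h2
        rcases Nat.even_or_odd (eqO ⟨v, hvO⟩).val with ⟨a, haa⟩ | ⟨a, haa⟩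
        · left
          apply Fin.ext
          simp only
          omega
        · right
          apply Fin.ext
          simp only
          omega
    · rw [if_neg hv]
      rw [Finset.card_eq_zero, Finset.filter_eq_empty_iff]
      intro i _
      simp only [hea, heb, Sum.elim_inr]
      rintro (h | h)
      · refine hv ?_
        have hmm := hpE_mem ⟨2 * i.val, by have := i.isLt; omega⟩
        rw [h, hO] at hmm
        simp only [Finset.mem_filter, Finset.mem_univ, true_and] at hmm
        exact hmm
      · refine hv ?_
        have hmm := hpE_mem ⟨2 * i.val + 1, by have := i.isLt; omega⟩
        rw [h, hO] at hmm
        simp only [Finset.mem_filter, Finset.mem_univ, true_and] at hmm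
        exact hmm
  have hdeg' : ∀ v, degA ea eb univ v
      = G.degree v + (if Odd (G.degree v) then 1 else 0) := by
    intro v
    unfold degA
    rw [card_filter_sum (p := fun e => ea e = v ∨ eb e = v), hreal_cnt v, hpad_cnt v]
  have hd'even : ∀ v, Even (degA ea eb univ v) := by
    intro v
    rw [hdeg' v]
    rcases Nat.even_or_odd (G.degree v) with he | ho
    · rw [if_neg (by rwa [Nat.not_odd_iff_even])]
      simpa using he
    · rw [if_pos ho]
      obtain ⟨a, ha⟩ := ho
      exact ⟨a + 1, by omega⟩
  have hd'low : ∀ v, 2 * k ≤ degA ea eb univ v := by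
    intro v
    rw [hdeg' v]
    have hdv := hδd v
    rcases Nat.even_or_odd (G.degree v) with he | ho
    · rw [if_neg (by rwa [Nat.not_odd_iff_even])]
      obtain ⟨a, ha⟩ := he
      omega
    · rw [if_pos ho]
      omega
  have hd'high : ∀ v, degA ea eb univ v ≤ 2 * (k * t) := by
    intro v
    rw [hdeg' v]
    have h1 : G.degree v ≤ Δ := hΔd v
    have e2 : δ * t = 2 * (k * t) ∨ δ * t + t = 2 * (k * t) := by
      rcases h2k with h | h
      · left
        calc δ * t = (2 * k) * t := by rw [h]
          _ = 2 * (k * t) := by ring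
      · right
        calc δ * t + t = (2 * k) * t := by rw [h]; ring
          _ = 2 * (k * t) := by ring
    rcases Nat.even_or_odd (G.degree v) with he | ho
    · rw [if_neg (by rwa [Nat.not_odd_iff_even])]
      omega
    · rw [if_pos ho]
      obtain ⟨a, ha⟩ := ho
      omega
  -- balanced (Eulerian) orientation
  obtain ⟨o₀, ho₀⟩ := exists_bal ea eb hab univ
  have hout_eq_in : ∀ v, outC ea eb o₀ univ v = inC ea eb o₀ univ v :=
    fun v => bal_even_eq ea eb hab ho₀ (hd'even v)
  have hsides : ∀ v, 2 * outC ea eb o₀ univ v = degA ea eb univ v := by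
    intro v
    have h := outC_add_inC ea eb hab o₀ univ v
    have h2 := hout_eq_in v
    omega
  have hsideLow : ∀ v, k ≤ outC ea eb o₀ univ v := by
    intro v
    have := hsides v
    have := hd'low v
    omega
  have hsideHigh : ∀ v, outC ea eb o₀ univ v ≤ k * t := by
    intro v
    have := hsides v
    have := hd'high v
    omega
  -- equitable coloring of the bipartite double
  set fa : (↥G.edgeFinset ⊕ Fin m) → V × Bool := fun e => (tl ea eb o₀ e, false) with hfa
  set fb : (↥G.edgeFinset ⊕ Fin m) → V × Bool := fun e => (hd ea eb o₀ e, true) with hfb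
  have hsided : ∀ e₁ e₂, fa e₁ ≠ fb e₂ := by
    intro e₁ e₂ h
    simpa [hfa, hfb] using congrArg Prod.snd h
  obtain ⟨c, hc⟩ := exists_equitable fa fb hsided hk1
  -- side counts
  have hSF : ∀ v i, incCnt fa fb c (v, false) i
      = #(univ.filter fun e => tl ea eb o₀ e = v ∧ c e = i) := by
    intro v i
    unfold incCnt
    apply card_filter_iff
    intro e
    constructor
    · rintro ⟨hor, hce⟩
      refine ⟨?_, hce⟩
      rcases hor with h | h
      · have h2 := congrArg Prod.fst h
        simpa [hfa] using h2
      · have h2 := congrArg Prod.snd h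
        simp [hfb] at h2
    · rintro ⟨htl, hce⟩
      exact ⟨Or.inl (by simp [hfa, htl]), hce⟩
  have hST : ∀ v i, incCnt fa fb c (v, true) i
      = #(univ.filter fun e => hd ea eb o₀ e = v ∧ c e = i) := by
    intro v i
    unfold incCnt
    apply card_filter_iff
    intro e
    constructor
    · rintro ⟨hor, hce⟩
      refine ⟨?_, hce⟩
      rcases hor with h | h
      · have h2 := congrArg Prod.snd h
        simp [hfa] at h2
      · have h2 := congrArg Prod.fst h
        simpa [hfb] using h2
    · rintro ⟨htl, hce⟩
      exact ⟨Or.inr (by simp [hfb, htl]), hce⟩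
  have hsumF : ∀ v, ∑ i ∈ univ, incCnt fa fb c (v, false) i = outC ea eb o₀ univ v := by
    intro v
    have h0 : outC ea eb o₀ univ v
        = ∑ i ∈ univ, #((univ.filter fun e => tl ea eb o₀ e = v).filter fun e => c e = i) :=
      Finset.card_eq_sum_card_fiberwise (fun e _ => Finset.mem_univ (c e))
    rw [h0]
    apply Finset.sum_congr rfl
    intro i _
    rw [hSF v i, Finset.filter_filter]
  have hsumT : ∀ v, ∑ i ∈ univ, incCnt fa fb c (v, true) i = outC ea eb o₀ univ v := by
    intro v
    rw [hout_eq_in v]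
    have h0 : inC ea eb o₀ univ v
        = ∑ i ∈ univ, #((univ.filter fun e => hd ea eb o₀ e = v).filter fun e => c e = i) :=
      Finset.card_eq_sum_card_fiberwise (fun e _ => Finset.mem_univ (c e))
    rw [h0]
    apply Finset.sum_congr rfl
    intro i _
    rw [hST v i, Finset.filter_filter]
  have hbndF : ∀ v i, 1 ≤ incCnt fa fb c (v, false) i ∧ incCnt fa fb c (v, false) i ≤ t :=
    fun v => cnt_bounds hk1 _ _ t (hsumF v) (fun i j => hc (v, false) i j)
      (hsideLow v) (hsideHigh v)
  have hbndT : ∀ v i, 1 ≤ incCnt fa fb c (v, true) i ∧ incCnt fa fb c (v, true) i ≤ t :=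
    fun v => cnt_bounds hk1 _ _ t (hsumT v) (fun i j => hc (v, true) i j)
      (hsideLow v) (hsideHigh v)
  -- total class counts at each vertex
  have hTot : ∀ v i, #(univ.filter fun e => (ea e = v ∨ eb e = v) ∧ c e = i)
      = incCnt fa fb c (v, false) i + incCnt fa fb c (v, true) i := by
    intro v i
    rw [hSF v i, hST v i]
    have hdis : ∀ e, ¬((tl ea eb o₀ e = v ∧ c e = i) ∧ (hd ea eb o₀ e = v ∧ c e = i)) := by
      rintro e ⟨⟨h1, -⟩, ⟨h2, -⟩⟩
      unfold tl at h1
      unfold hd at h2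
      apply hab e
      cases hoe : o₀ e <;> rw [hoe] at h1 h2 <;> simp at h1 h2
      · exact h2.trans h1.symm
      · exact h1.trans h2.symm
    rw [← card_or_split hdis]
    apply card_filter_iff
    intro e
    unfold tl hd
    cases hoe : o₀ e <;> simp [hoe] <;> tauto
  have hTotUB : ∀ v i, #(univ.filter fun e => (ea e = v ∨ eb e = v) ∧ c e = i) ≤ 2 * t := by
    intro v i
    rw [hTot v i]
    have := (hbndF v i).2
    have := (hbndT v i).2
    omega
  have hTotLB : ∀ v i, 2 ≤ #(univ.filter fun e => (ea e = v ∨ eb e = v) ∧ c e = i) := by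
    intro v i
    rw [hTot v i]
    have := (hbndF v i).1
    have := (hbndT v i).1
    omega
  -- at least one REAL edge of every color at every vertex
  have hReal : ∀ v (i : Fin k), 1 ≤ #(univ.filter fun e : ↥G.edgeFinset =>
      (ea (Sum.inl e) = v ∨ eb (Sum.inl e) = v) ∧ c (Sum.inl e) = i) := by
    intro v i
    have hsplit := card_filter_sum (p := fun e => (ea e = v ∨ eb e = v) ∧ c e = i)
    have hpads : #(univ.filter fun p : Fin m =>
        (ea (Sum.inr p) = v ∨ eb (Sum.inr p) = v) ∧ c (Sum.inr p) = i) ≤ 1 := by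
      have hsub : (univ.filter fun p : Fin m =>
          (ea (Sum.inr p) = v ∨ eb (Sum.inr p) = v) ∧ c (Sum.inr p) = i)
          ⊆ univ.filter fun p : Fin m => ea (Sum.inr p) = v ∨ eb (Sum.inr p) = v := by
        intro p hp
        simp only [Finset.mem_filter, Finset.mem_univ, true_and] at hp ⊢
        exact hp.1
      have h2 := Finset.card_le_card hsub
      rw [hpad_cnt v] at h2
      have h3 : (if Odd (G.degree v) then 1 else 0) ≤ 1 := by split <;> omega
      omega
    have h2 := hTotLB v i
    omega
  -- the final coloring
  set cF : Sym2 V → ℕ :=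
    fun s => if h : s ∈ G.edgeFinset then (c (Sum.inl ⟨s, h⟩)).val + 1 else 0 with hcF
  refine ⟨cF, ?_, ?_⟩
  · -- impropriety bound
    intro v n
    have hncard : {w | G.Adj v w ∧ cF s(v, w) = n}.ncard
        = #(univ.filter fun w => G.Adj v w ∧ cF s(v, w) = n) := by
      rw [Set.ncard_eq_toFinset_card', Set.toFinset_setOf]
    rw [hncard]
    rcases n with _ | nn
    · have hemp0 : (univ.filter fun w => G.Adj v w ∧ cF s(v, w) = 0) = ∅ := by
        rw [Finset.filter_eq_empty_iff]
        intro w _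
        rintro ⟨haw, hcw⟩
        have hmem : s(v, w) ∈ G.edgeFinset := SimpleGraph.mem_edgeFinset.2 haw
        simp only [hcF] at hcw
        rw [dif_pos hmem] at hcw
        omega
      rw [hemp0]
      simp
    · by_cases hnn : nn < k
      · rcases Finset.eq_empty_or_nonempty
            (univ.filter fun w => G.Adj v w ∧ cF s(v, w) = nn + 1) with hemp | hne
        · rw [hemp]; simp
        · obtain ⟨w₀, hw₀⟩ := hne
          simp only [Finset.mem_filter, Finset.mem_univ, true_and] at hw₀
          haveI hnemp : Nonempty (↥G.edgeFinset ⊕ Fin m) :=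
            ⟨Sum.inl ⟨s(v, w₀), SimpleGraph.mem_edgeFinset.2 hw₀.1⟩⟩
          refine le_trans (Finset.card_le_card_of_injOn
            (fun w => if h : s(v, w) ∈ G.edgeFinset then Sum.inl ⟨s(v, w), h⟩
              else Classical.arbitrary _) ?_ ?_) (hTotUB v ⟨nn, hnn⟩)
          · intro w hw
            simp only [Finset.mem_coe, Finset.mem_filter, Finset.mem_univ, true_and] at hw
            obtain ⟨haw, hcw⟩ := hw
            have hmem : s(v, w) ∈ G.edgeFinset := SimpleGraph.mem_edgeFinset.2 haw
            beta_reduce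
            rw [dif_pos hmem]
            simp only [Finset.mem_coe, Finset.mem_filter, Finset.mem_univ, true_and]
            constructor
            · exact (hmemiff ⟨s(v, w), hmem⟩ v).1
                (by show v ∈ s(v, w); rw [Sym2.mem_iff]; exact Or.inl rfl)
            · simp only [hcF] at hcw
              rw [dif_pos hmem] at hcw
              exact Fin.ext (by simp only; omega)
          · intro w1 hw1 w2 hw2 h
            simp only [Finset.coe_filter, Set.mem_setOf_eq, Finset.mem_univ,
              true_and] at hw1 hw2
            have hm1 : s(v, w1) ∈ G.edgeFinset := SimpleGraph.mem_edgeFinset.2 hw1.1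
            have hm2 : s(v, w2) ∈ G.edgeFinset := SimpleGraph.mem_edgeFinset.2 hw2.1
            beta_reduce at h
            rw [dif_pos hm1, dif_pos hm2] at h
            have h2 : s(v, w1) = s(v, w2) :=
              congrArg Subtype.val (Sum.inl_injective h)
            exact Sym2.congr_right.1 h2
      · have hempk : (univ.filter fun w => G.Adj v w ∧ cF s(v, w) = nn + 1) = ∅ := by
          rw [Finset.filter_eq_empty_iff]
          intro w _
          rintro ⟨haw, hcw⟩
          have hmem : s(v, w) ∈ G.edgeFinset := SimpleGraph.mem_edgeFinset.2 haw
          simp only [hcF] at hcw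
          rw [dif_pos hmem] at hcw
          have := (c (Sum.inl ⟨s(v, w), hmem⟩)).isLt
          omega
        rw [hempk]
        simp
  · -- interval property
    intro v
    have hspec : G.colorSpectrum cF v = Set.Icc 1 k := by
      ext n
      simp only [SimpleGraph.colorSpectrum, Set.mem_setOf_eq, Set.mem_Icc]
      constructor
      · rintro ⟨w, haw, hcw⟩
        have hmem : s(v, w) ∈ G.edgeFinset := SimpleGraph.mem_edgeFinset.2 haw
        simp only [hcF] at hcw
        rw [dif_pos hmem] at hcw
        have := (c (Sum.inl ⟨s(v, w), hmem⟩)).isLt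
        omega
      · rintro ⟨h1, h2⟩
        have hcnt := hReal v ⟨n - 1, by omega⟩
        obtain ⟨e, he⟩ := Finset.card_pos.1 (by omega : 0 < #(univ.filter
          fun e : ↥G.edgeFinset => (ea (Sum.inl e) = v ∨ eb (Sum.inl e) = v)
            ∧ c (Sum.inl e) = ⟨n - 1, by omega⟩))
        simp only [Finset.mem_filter, Finset.mem_univ, true_and] at he
        obtain ⟨hinc, hcol⟩ := he
        have hvmem : v ∈ e.val := (hmemiff e v).2 hinc
        refine ⟨Sym2.Mem.other hvmem, ?_, ?_⟩
        · have hsp := Sym2.other_spec hvmem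
          have hmm : e.val ∈ G.edgeSet := SimpleGraph.mem_edgeFinset.1 e.property
          rw [← hsp] at hmm
          exact hmm
        · have hsp := Sym2.other_spec hvmem
          have hmem2 : s(v, Sym2.Mem.other hvmem) ∈ G.edgeFinset := by
            rw [hsp]; exact e.property
          simp only [hcF]
          rw [dif_pos hmem2]
          have heq : (⟨s(v, Sym2.Mem.other hvmem), hmem2⟩ : ↥G.edgeFinset) = e :=
            Subtype.ext hsp
          rw [heq, hcol]
          simp only
          omega
    rw [hspec]
    intro a ha b hb x hax hxb
    simp only [Set.mem_Icc] at *
    omega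

end IntervalImpro

/-- If `G` has minimum degree at least 1, then `μ_int(G) ≤ 2⌈Δ(G)/δ(G)⌉`. -/
theorem statement15 {V : Type*} [Fintype V] (G : SimpleGraph V) [DecidableRel G.Adj]
    (hδ : 1 ≤ G.minDegree) :
    G.muInt ≤ 2 * ((G.maxDegree + G.minDegree - 1) / G.minDegree) := by
  classical
  cases isEmpty_or_nonempty V with
  | inl h =>
    have hmem : (2 * ((G.maxDegree + G.minDegree - 1) / G.minDegree)) ∈
        {k | ∃ c : Sym2 V → ℕ, G.IsImproperIntervalColoring c k} :=
      ⟨fun _ => 0, fun v _ => (IsEmpty.false v).elim, fun v => (IsEmpty.false v).elim⟩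
    exact Nat.sInf_le hmem
  | inr h =>
    obtain ⟨c, hc⟩ := IntervalImpro.main_construction G hδ
    exact Nat.sInf_le ⟨c, hc⟩
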